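/- Biclustering of 0-1 matrices with L1 cost admits a (1+√2)-approximation by independent one-way clusterings: if R minimizes L_R and C minimizes L_C under L1 cost, then L ≤ (1+√2)·L*. -/
import Mathlib


open Finset in
/-- L1 cost (about a median) of the 0-1 submatrix of `X` induced by rows `R` and
columns `C`: the smaller of the number of ones and the number of zeros. -/
def V1 {N M : ℕ} (X : Fin N → Fin M → Bool)
    (R : Finset (Fin N)) (C : Finset (Fin M)) : ℕ :=
  min ((R ×ˢ C).filter (fun p => X p.1 p.2 = true)).card
    (R.card * C.card - ((R ×ˢ C).filter (fun p => X p.1 p.2 = true)).card)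

open Finset

lemma ALG (s t u v w t' u' v' w' : ℝ) (hs : s*s = 2) (hs1 : 1 ≤ s)
    (ht : 0 ≤ t) (hu : 0 ≤ u) (hv : 0 ≤ v) (hw : 0 ≤ w)
    (ht' : 0 ≤ t') (hu' : 0 ≤ u') (hv' : 0 ≤ v') (hw' : 0 ≤ w')
    (H1 : t+u+v+w ≤ t'+u'+v'+w')
    (H6 : (t+t')*(w+w') = (u+u')*(v+v')) :
    2*(t+u+v+w) ≤ (1+s)*(((t+v) + (u'+w')) + ((t+u) + (v'+w'))) := by
  have hs0 : (0:ℝ) ≤ s := by linarith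
  have hs1' : (0:ℝ) ≤ s - 1 := by linarith
  have hEn : (0:ℝ) ≤ u'+v' := by linarith
  have hFn : (0:ℝ) ≤ u+v := by linarith
  have hTn : (0:ℝ) ≤ t+t' := by linarith
  have fact1 : 4*(t+t')*w ≤ ((u'+v')+(u+v))^2 := by
    nlinarith [sq_nonneg ((u+u') - (v+v')), mul_nonneg hTn hw', H6]
  have hG0 : 0 ≤ 2*s*t + (s-1)*(u+v) + (1+s)*(u'+v') + (2+2*s)*w' := by
    have h1 := mul_nonneg hs0 ht
    have h2 := mul_nonneg hs1' hFn
    have h3 := mul_nonneg hs0 hEn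
    have h4 := mul_nonneg hs0 hw'
    linarith [h1, h2, h3, h4]
  suffices h : 2*w ≤ 2*s*t + (s-1)*(u+v) + (1+s)*(u'+v') + (2+2*s)*w' by nlinarith [h]
  by_cases h2 : 2*(t+t') ≤ (2*s+4)*t + (s+1)*(u+v) + (s-1)*(u'+v') + 2*s*w'
  · linarith
  · push_neg at h2
    have hRn : 0 ≤ (2*s+4)*t + (s+1)*(u+v) + (s-1)*(u'+v') + 2*s*w' := by
      have h1 := mul_nonneg hs0 ht
      have h2 := mul_nonneg hs1' hEn
      have h3 := mul_nonneg hs0 hFn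
      have h4 := mul_nonneg hs0 hw'
      linarith [h1, h2, h3, h4]
    have hTpos : (0:ℝ) < t+t' := by linarith
    have hid : (2*s*t + (s-1)*(u+v) + (1+s)*(u'+v') + (2+2*s)*w') *
        ((2*s+4)*t + (s+1)*(u+v) + (s-1)*(u'+v') + 2*s*w')
        = ((u'+v')+(u+v))^2
          + (8*w'^2 + 10*(u+v)*w' + 6*(u'+v')*w' + 4*(u'+v')*(u+v) + 24*t*w'
             + 4*t*(u+v) + 12*t*(u'+v') + 8*t^2)
          + s*(4*w'^2 + 2*(u+v)*w' + 2*(u'+v')*w' + 12*t*w' + 4*t*(u+v)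
             + 4*t*(u'+v') + 8*t^2) := by
      linear_combination (4*w'^2 + 4*(u+v)*w' + (u+v)^2 + 4*(u'+v')*w' + 2*(u'+v')*(u+v)
        + (u'+v')^2 + 8*t*w' + 4*t*(u+v) + 4*t*(u'+v') + 4*t^2)*hs
    have hAn : 0 ≤ 8*w'^2 + 10*(u+v)*w' + 6*(u'+v')*w' + 4*(u'+v')*(u+v) + 24*t*w'
             + 4*t*(u+v) + 12*t*(u'+v') + 8*t^2 := by
      have h1 := mul_nonneg hFn hw'
      have h2 := mul_nonneg hEn hw'
      have h3 := mul_nonneg hEn hFn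
      have h4 := mul_nonneg ht hw'
      have h5 := mul_nonneg ht hFn
      have h6 := mul_nonneg ht hEn
      linarith [h1, h2, h3, h4, h5, h6, sq_nonneg w', sq_nonneg t]
    have hBn : 0 ≤ 4*w'^2 + 2*(u+v)*w' + 2*(u'+v')*w' + 12*t*w' + 4*t*(u+v)
             + 4*t*(u'+v') + 8*t^2 := by
      have h1 := mul_nonneg hFn hw'
      have h2 := mul_nonneg hEn hw'
      have h4 := mul_nonneg ht hw'
      have h5 := mul_nonneg ht hFn
      have h6 := mul_nonneg ht hEn
      linarith [h1, h2, h4, h5, h6, sq_nonneg w', sq_nonneg t]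
    have sos : ((u'+v')+(u+v))^2 ≤ (2*s*t + (s-1)*(u+v) + (1+s)*(u'+v') + (2+2*s)*w') *
        ((2*s+4)*t + (s+1)*(u+v) + (s-1)*(u'+v') + 2*s*w') := by
      have hsB := mul_nonneg hs0 hBn
      linarith [hid, hAn, hsB]
    have key : (2*(t+t'))*(2*w) ≤ (2*(t+t'))*(2*s*t + (s-1)*(u+v) + (1+s)*(u'+v') + (2+2*s)*w') := by
      have step : (2*s*t + (s-1)*(u+v) + (1+s)*(u'+v') + (2+2*s)*w') *
          ((2*s+4)*t + (s+1)*(u+v) + (s-1)*(u'+v') + 2*s*w') ≤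
          (2*s*t + (s-1)*(u+v) + (1+s)*(u'+v') + (2+2*s)*w') * (2*(t+t')) :=
        mul_le_mul_of_nonneg_left (le_of_lt h2) hG0
      linarith [fact1, sos, step]
    have := le_of_mul_le_mul_left key (by linarith : (0:ℝ) < 2*(t+t'))
    linarith

lemma cell_sum {N M : ℕ} (f g : Fin N → Fin M → ℕ) (hfg : ∀ i j, f i j + g i j = 1)
    (S : Finset (Fin N)) (T : Finset (Fin M)) :
    (∑ i ∈ S, ∑ j ∈ T, f i j) + (∑ i ∈ S, ∑ j ∈ T, g i j) = S.card * T.card := by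
  rw [← Finset.sum_add_distrib]
  have : ∀ i ∈ S, (∑ j ∈ T, f i j) + (∑ j ∈ T, g i j) = T.card := by
    intro i _
    rw [← Finset.sum_add_distrib]
    simp [hfg]
  rw [Finset.sum_congr rfl this]
  simp [mul_comm]

lemma V1_eq {N M : ℕ} (X : Fin N → Fin M → Bool) (R : Finset (Fin N)) (C : Finset (Fin M)) :
    V1 X R C = min (∑ i ∈ R, ∑ j ∈ C, (if X i j then 1 else 0))
                   (∑ i ∈ R, ∑ j ∈ C, (if X i j then 0 else 1)) := by
  have hcard : ((R ×ˢ C).filter (fun p => X p.1 p.2 = true)).card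
      = ∑ i ∈ R, ∑ j ∈ C, (if X i j then 1 else 0) := by
    rw [Finset.card_filter, Finset.sum_product]
  have hsum := cell_sum (fun i j => if X i j then 1 else 0) (fun i j => if X i j then 0 else 1)
    (by intro i j; by_cases h : X i j <;> simp [h]) R C
  unfold V1
  rw [hcard]
  omega

lemma aux_block {N M : ℕ} (f g : Fin N → Fin M → ℕ) (hfg : ∀ i j, f i j + g i j = 1)
    (R : Finset (Fin N)) (C : Finset (Fin M))
    (hle : (∑ i ∈ R, ∑ j ∈ C, f i j) ≤ ∑ i ∈ R, ∑ j ∈ C, g i j) :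
    2 * ((∑ i ∈ R, ∑ j ∈ C, f i j : ℕ) : ℝ) ≤ (1 + Real.sqrt 2) *
      (((∑ i ∈ R, min (∑ j ∈ C, f i j) (∑ j ∈ C, g i j) : ℕ) : ℝ) +
       ((∑ j ∈ C, min (∑ i ∈ R, f i j) (∑ i ∈ R, g i j) : ℕ) : ℝ)) := by
  classical
  set P := R.filter (fun i => ∑ j ∈ C, f i j ≤ ∑ j ∈ C, g i j) with hP
  set Q := R.filter (fun i => ¬ (∑ j ∈ C, f i j ≤ ∑ j ∈ C, g i j)) with hQ
  set A := C.filter (fun j => ∑ i ∈ R, f i j ≤ ∑ i ∈ R, g i j) with hA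
  set B := C.filter (fun j => ¬ (∑ i ∈ R, f i j ≤ ∑ i ∈ R, g i j)) with hB
  -- inner split over columns
  have colsplit : ∀ (h : Fin M → ℕ), ∑ j ∈ C, h j = ∑ j ∈ A, h j + ∑ j ∈ B, h j := by
    intro h; rw [hA, hB, Finset.sum_filter_add_sum_filter_not]
  have rowsplit : ∀ (h : Fin N → ℕ), ∑ i ∈ R, h i = ∑ i ∈ P, h i + ∑ i ∈ Q, h i := by
    intro h; rw [hP, hQ, Finset.sum_filter_add_sum_filter_not]
  -- eight quantities
  set t := ∑ i ∈ P, ∑ j ∈ A, f i j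
  set u := ∑ i ∈ Q, ∑ j ∈ A, f i j
  set v := ∑ i ∈ P, ∑ j ∈ B, f i j
  set w := ∑ i ∈ Q, ∑ j ∈ B, f i j
  set t' := ∑ i ∈ P, ∑ j ∈ A, g i j
  set u' := ∑ i ∈ Q, ∑ j ∈ A, g i j
  set v' := ∑ i ∈ P, ∑ j ∈ B, g i j
  set w' := ∑ i ∈ Q, ∑ j ∈ B, g i j
  -- total ones decomposition
  have hofour : ∑ i ∈ R, ∑ j ∈ C, f i j = t + u + v + w := by
    rw [rowsplit]
    have h1 : ∑ i ∈ P, ∑ j ∈ C, f i j = t + v := by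
      rw [← Finset.sum_add_distrib]; exact Finset.sum_congr rfl fun i _ => colsplit _
    have h2 : ∑ i ∈ Q, ∑ j ∈ C, f i j = u + w := by
      rw [← Finset.sum_add_distrib]; exact Finset.sum_congr rfl fun i _ => colsplit _
    omega
  have hzfour : ∑ i ∈ R, ∑ j ∈ C, g i j = t' + u' + v' + w' := by
    rw [rowsplit]
    have h1 : ∑ i ∈ P, ∑ j ∈ C, g i j = t' + v' := by
      rw [← Finset.sum_add_distrib]; exact Finset.sum_congr rfl fun i _ => colsplit _
    have h2 : ∑ i ∈ Q, ∑ j ∈ C, g i j = u' + w' := by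
      rw [← Finset.sum_add_distrib]; exact Finset.sum_congr rfl fun i _ => colsplit _
    omega
  -- row cost decomposition
  have hrow : ∑ i ∈ R, min (∑ j ∈ C, f i j) (∑ j ∈ C, g i j) = (t + v) + (u' + w') := by
    rw [rowsplit]
    have h1 : ∑ i ∈ P, min (∑ j ∈ C, f i j) (∑ j ∈ C, g i j) = t + v := by
      rw [← Finset.sum_add_distrib]
      apply Finset.sum_congr rfl
      intro i hi
      rw [hP, Finset.mem_filter] at hi
      rw [min_eq_left hi.2, colsplit]
    have h2 : ∑ i ∈ Q, min (∑ j ∈ C, f i j) (∑ j ∈ C, g i j) = u' + w' := by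
      rw [← Finset.sum_add_distrib]
      apply Finset.sum_congr rfl
      intro i hi
      rw [hQ, Finset.mem_filter] at hi
      rw [min_eq_right (le_of_not_ge hi.2), colsplit]
    omega
  -- column cost decomposition
  have hswap : ∀ (S : Finset (Fin N)) (T : Finset (Fin M)) (h : Fin N → Fin M → ℕ),
      ∑ j ∈ T, ∑ i ∈ S, h i j = ∑ i ∈ S, ∑ j ∈ T, h i j := fun S T h => Finset.sum_comm
  have hcol : ∑ j ∈ C, min (∑ i ∈ R, f i j) (∑ i ∈ R, g i j) = (t + u) + (v' + w') := by
    rw [colsplit]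
    have h1 : ∑ j ∈ A, min (∑ i ∈ R, f i j) (∑ i ∈ R, g i j) = t + u := by
      have : ∀ j ∈ A, min (∑ i ∈ R, f i j) (∑ i ∈ R, g i j) = ∑ i ∈ R, f i j := by
        intro j hj
        rw [hA, Finset.mem_filter] at hj
        exact min_eq_left hj.2
      rw [Finset.sum_congr rfl this, hswap, rowsplit (fun i => ∑ j ∈ A, f i j)]
    have h2 : ∑ j ∈ B, min (∑ i ∈ R, f i j) (∑ i ∈ R, g i j) = v' + w' := by
      have : ∀ j ∈ B, min (∑ i ∈ R, f i j) (∑ i ∈ R, g i j) = ∑ i ∈ R, g i j := by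
        intro j hj
        rw [hB, Finset.mem_filter] at hj
        exact min_eq_right (le_of_not_ge hj.2)
      rw [Finset.sum_congr rfl this, hswap, rowsplit (fun i => ∑ j ∈ B, g i j)]
    omega
  -- product identity
  have hprod : (t + t') * (w + w') = (u + u') * (v + v') := by
    rw [cell_sum f g hfg P A, cell_sum f g hfg Q B, cell_sum f g hfg Q A, cell_sum f g hfg P B]
    ring
  -- assemble
  rw [hofour, hrow, hcol]
  rw [hofour, hzfour] at hle
  have hs : Real.sqrt 2 * Real.sqrt 2 = 2 := Real.mul_self_sqrt (by norm_num)
  have hs1 : (1:ℝ) ≤ Real.sqrt 2 := by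
    nlinarith [Real.sqrt_nonneg 2, hs]
  have := ALG (Real.sqrt 2) t u v w t' u' v' w' hs hs1
    (by positivity) (by positivity) (by positivity) (by positivity)
    (by positivity) (by positivity) (by positivity) (by positivity)
    (by exact_mod_cast hle) (by exact_mod_cast congrArg (fun n : ℕ => (n : ℝ)) hprod)
  push_cast
  push_cast at this
  linarith

lemma V1_single_col {N M : ℕ} (X : Fin N → Fin M → Bool) (R : Finset (Fin N)) (j : Fin M) :
    V1 X R {j} = min (∑ i ∈ R, (if X i j then 1 else 0)) (∑ i ∈ R, (if X i j then 0 else 1)) := by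
  rw [V1_eq]
  congr 1 <;> exact Finset.sum_congr rfl fun i _ => Finset.sum_singleton _ _

lemma V1_single_row {N M : ℕ} (X : Fin N → Fin M → Bool) (i : Fin N) (C : Finset (Fin M)) :
    V1 X {i} C = min (∑ j ∈ C, (if X i j then 1 else 0)) (∑ j ∈ C, (if X i j then 0 else 1)) := by
  rw [V1_eq]
  congr 1 <;> exact Finset.sum_singleton _ _

lemma superadd_col {N M : ℕ} (X : Fin N → Fin M → Bool) (R : Finset (Fin N)) (C : Finset (Fin M)) :
    (∑ j ∈ C, V1 X R {j}) ≤ V1 X R C := by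
  rw [V1_eq, Finset.sum_congr rfl (fun j _ => V1_single_col X R j)]
  refine le_min ?_ ?_
  · calc ∑ j ∈ C, min (∑ i ∈ R, (if X i j then 1 else 0)) (∑ i ∈ R, (if X i j then 0 else 1))
        ≤ ∑ j ∈ C, ∑ i ∈ R, (if X i j then 1 else 0) :=
          Finset.sum_le_sum fun j _ => min_le_left _ _
      _ = ∑ i ∈ R, ∑ j ∈ C, (if X i j then 1 else 0) := Finset.sum_comm
  · calc ∑ j ∈ C, min (∑ i ∈ R, (if X i j then 1 else 0)) (∑ i ∈ R, (if X i j then 0 else 1))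
        ≤ ∑ j ∈ C, ∑ i ∈ R, (if X i j then 0 else 1) :=
          Finset.sum_le_sum fun j _ => min_le_right _ _
      _ = ∑ i ∈ R, ∑ j ∈ C, (if X i j then 0 else 1) := Finset.sum_comm

lemma superadd_row {N M : ℕ} (X : Fin N → Fin M → Bool) (R : Finset (Fin N)) (C : Finset (Fin M)) :
    (∑ i ∈ R, V1 X {i} C) ≤ V1 X R C := by
  rw [V1_eq, Finset.sum_congr rfl (fun i _ => V1_single_row X i C)]
  exact le_min (Finset.sum_le_sum fun i _ => min_le_left _ _)
    (Finset.sum_le_sum fun i _ => min_le_right _ _)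

lemma block_bound {N M : ℕ} (X : Fin N → Fin M → Bool) (R : Finset (Fin N)) (C : Finset (Fin M)) :
    2 * ((V1 X R C : ℕ) : ℝ) ≤ (1 + Real.sqrt 2) *
      (((∑ i ∈ R, V1 X {i} C : ℕ) : ℝ) + ((∑ j ∈ C, V1 X R {j} : ℕ) : ℝ)) := by
  classical
  set f : Fin N → Fin M → ℕ := fun i j => if X i j then 1 else 0 with hf
  set g : Fin N → Fin M → ℕ := fun i j => if X i j then 0 else 1 with hg
  have hfg : ∀ i j, f i j + g i j = 1 := by
    intro i j; by_cases h : X i j <;> simp [hf, hg, h]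
  have hgf : ∀ i j, g i j + f i j = 1 := fun i j => by rw [add_comm]; exact hfg i j
  have hrowc : (∑ i ∈ R, V1 X {i} C) = ∑ i ∈ R, min (∑ j ∈ C, f i j) (∑ j ∈ C, g i j) :=
    Finset.sum_congr rfl fun i _ => V1_single_row X i C
  have hcolc : (∑ j ∈ C, V1 X R {j}) = ∑ j ∈ C, min (∑ i ∈ R, f i j) (∑ i ∈ R, g i j) :=
    Finset.sum_congr rfl fun j _ => V1_single_col X R j
  rw [V1_eq, hrowc, hcolc]
  rcases le_or_gt (∑ i ∈ R, ∑ j ∈ C, f i j) (∑ i ∈ R, ∑ j ∈ C, g i j) with hle | hlt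
  · rw [min_eq_left hle]
    exact aux_block f g hfg R C hle
  · rw [min_eq_right hlt.le]
    have h := aux_block g f hgf R C hlt.le
    have e1 : (∑ i ∈ R, min (∑ j ∈ C, g i j) (∑ j ∈ C, f i j))
        = ∑ i ∈ R, min (∑ j ∈ C, f i j) (∑ j ∈ C, g i j) :=
      Finset.sum_congr rfl fun i _ => min_comm _ _
    have e2 : (∑ j ∈ C, min (∑ i ∈ R, g i j) (∑ i ∈ R, f i j))
        = ∑ j ∈ C, min (∑ i ∈ R, f i j) (∑ i ∈ R, g i j) :=
      Finset.sum_congr rfl fun j _ => min_comm _ _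
    rw [e1, e2] at h
    exact h


open Finset in
/-- Biclustering of 0-1 matrices with L1 cost admits a (1+√2)-approximation by
independent optimal one-way row and column clusterings. -/
theorem l1_biclustering_approx (N M Kr Kc : ℕ) (X : Fin N → Fin M → Bool)
    (ρ : Fin N → Fin Kr) (γ : Fin M → Fin Kc)
    (hρ : ∀ ρ' : Fin N → Fin Kr,
      ∑ k, ∑ j : Fin M, V1 X (Finset.univ.filter (fun i => ρ i = k)) {j} ≤
        ∑ k, ∑ j : Fin M, V1 X (Finset.univ.filter (fun i => ρ' i = k)) {j})
    (hγ : ∀ γ' : Fin M → Fin Kc,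
      ∑ i : Fin N, ∑ l, V1 X {i} (Finset.univ.filter (fun j => γ j = l)) ≤
        ∑ i : Fin N, ∑ l, V1 X {i} (Finset.univ.filter (fun j => γ' j = l)))
    (ρs : Fin N → Fin Kr) (γs : Fin M → Fin Kc) :
    ((∑ k, ∑ l,
        V1 X (Finset.univ.filter (fun i => ρ i = k))
          (Finset.univ.filter (fun j => γ j = l)) : ℕ) : ℝ) ≤
      (1 + Real.sqrt 2) * ((∑ k, ∑ l,
        V1 X (Finset.univ.filter (fun i => ρs i = k))
          (Finset.univ.filter (fun j => γs j = l)) : ℕ) : ℝ) := by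
  classical
  have hs0 : (0:ℝ) ≤ Real.sqrt 2 := Real.sqrt_nonneg 2
  set Rρ : Fin Kr → Finset (Fin N) := fun k => Finset.univ.filter (fun i => ρ i = k) with hRρ
  set Cγ : Fin Kc → Finset (Fin M) := fun l => Finset.univ.filter (fun j => γ j = l) with hCγ
  set Rs : Fin Kr → Finset (Fin N) := fun k => Finset.univ.filter (fun i => ρs i = k) with hRs
  set Cs : Fin Kc → Finset (Fin M) := fun l => Finset.univ.filter (fun j => γs j = l) with hCs
  -- block-wise bound, summed
  have step1 : 2 * ((∑ k, ∑ l, V1 X (Rρ k) (Cγ l) : ℕ) : ℝ) ≤ (1 + Real.sqrt 2) *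
      (((∑ k, ∑ l, ∑ i ∈ Rρ k, V1 X {i} (Cγ l) : ℕ) : ℝ) +
       ((∑ k, ∑ l, ∑ j ∈ Cγ l, V1 X (Rρ k) {j} : ℕ) : ℝ)) := by
    have h := Finset.sum_le_sum (s := (univ : Finset (Fin Kr))) fun k _ =>
      Finset.sum_le_sum (s := (univ : Finset (Fin Kc))) fun l _ => block_bound X (Rρ k) (Cγ l)
    push_cast at h ⊢
    simp only [Finset.mul_sum, mul_add, Finset.sum_add_distrib] at h ⊢
    convert h using 1
  -- bookkeeping
  have id1 : (∑ k, ∑ l, ∑ i ∈ Rρ k, V1 X {i} (Cγ l)) = ∑ i : Fin N, ∑ l, V1 X {i} (Cγ l) := by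
    calc ∑ k, ∑ l, ∑ i ∈ Rρ k, V1 X {i} (Cγ l)
        = ∑ l, ∑ k, ∑ i ∈ Rρ k, V1 X {i} (Cγ l) := Finset.sum_comm
      _ = ∑ l, ∑ i : Fin N, V1 X {i} (Cγ l) :=
          Finset.sum_congr rfl fun l _ => Finset.sum_fiberwise _ _ _
      _ = ∑ i : Fin N, ∑ l, V1 X {i} (Cγ l) := Finset.sum_comm
  have id2 : (∑ k, ∑ l, ∑ j ∈ Cγ l, V1 X (Rρ k) {j}) = ∑ k, ∑ j : Fin M, V1 X (Rρ k) {j} :=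
    Finset.sum_congr rfl fun k _ => Finset.sum_fiberwise _ _ _
  -- comparison with optimum
  have hA : (∑ k, ∑ j : Fin M, V1 X (Rs k) {j}) ≤ ∑ k, ∑ l, V1 X (Rs k) (Cs l) := by
    refine Finset.sum_le_sum fun k _ => ?_
    calc (∑ j : Fin M, V1 X (Rs k) {j})
        = ∑ l, ∑ j ∈ Cs l, V1 X (Rs k) {j} := (Finset.sum_fiberwise _ _ _).symm
      _ ≤ ∑ l, V1 X (Rs k) (Cs l) := Finset.sum_le_sum fun l _ => superadd_col X _ _
  have hB : (∑ i : Fin N, ∑ l, V1 X {i} (Cs l)) ≤ ∑ k, ∑ l, V1 X (Rs k) (Cs l) := by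
    calc (∑ i : Fin N, ∑ l, V1 X {i} (Cs l))
        = ∑ l, ∑ i : Fin N, V1 X {i} (Cs l) := Finset.sum_comm
      _ = ∑ l, ∑ k, ∑ i ∈ Rs k, V1 X {i} (Cs l) :=
          Finset.sum_congr rfl fun l _ => (Finset.sum_fiberwise _ _ _).symm
      _ ≤ ∑ l, ∑ k, V1 X (Rs k) (Cs l) :=
          Finset.sum_le_sum fun l _ => Finset.sum_le_sum fun k _ => superadd_row X _ _
      _ = ∑ k, ∑ l, V1 X (Rs k) (Cs l) := Finset.sum_comm
  have hrow_le : (∑ k, ∑ l, ∑ j ∈ Cγ l, V1 X (Rρ k) {j}) ≤ ∑ k, ∑ l, V1 X (Rs k) (Cs l) := by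
    rw [id2]; exact le_trans (hρ ρs) hA
  have hcol_le : (∑ k, ∑ l, ∑ i ∈ Rρ k, V1 X {i} (Cγ l)) ≤ ∑ k, ∑ l, V1 X (Rs k) (Cs l) := by
    rw [id1]; exact le_trans (hγ γs) hB
  have hc1 : ((∑ k, ∑ l, ∑ i ∈ Rρ k, V1 X {i} (Cγ l) : ℕ) : ℝ)
      ≤ ((∑ k, ∑ l, V1 X (Rs k) (Cs l) : ℕ) : ℝ) := by exact_mod_cast hcol_le
  have hc2 : ((∑ k, ∑ l, ∑ j ∈ Cγ l, V1 X (Rρ k) {j} : ℕ) : ℝ)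
      ≤ ((∑ k, ∑ l, V1 X (Rs k) (Cs l) : ℕ) : ℝ) := by exact_mod_cast hrow_le
  have step2 : (1 + Real.sqrt 2) *
      (((∑ k, ∑ l, ∑ i ∈ Rρ k, V1 X {i} (Cγ l) : ℕ) : ℝ) +
       ((∑ k, ∑ l, ∑ j ∈ Cγ l, V1 X (Rρ k) {j} : ℕ) : ℝ)) ≤
      (1 + Real.sqrt 2) * (((∑ k, ∑ l, V1 X (Rs k) (Cs l) : ℕ) : ℝ) +
        ((∑ k, ∑ l, V1 X (Rs k) (Cs l) : ℕ) : ℝ)) :=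
    mul_le_mul_of_nonneg_left (by linarith) (by linarith)
  linarith
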